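/- Let A be a real n×n matrix, a₀ a complex n×n matrix, and ξ : ℝ → ℝⁿ∖{0} a curve differentiable at t₀ with ξ'(t₀) = −Aᵀ ξ(t₀). Let P(η) = I − ηηᵀ/‖η‖² for η ∈ ℝⁿ∖{0} (the orthogonal projection onto the hyperplane η^⊥), and let P'(t₀) denote the derivative at t₀ of the matrix-valued curve t ↦ P(ξ(t)). Then for every b ∈ ℂⁿ with b·ξ(t₀) = 0, (P(ξ(t₀)) a₀ + P'(t₀)) b = (a₀ + (ξ(t₀)ξ(t₀)ᵀ/‖ξ(t₀)‖²)(A − a₀)) b; that is, on divergence-free amplitudes the general constraint-preserving modification p·a₀ + p_t of the symbol a₀ coincides with a₀ + (ξ⊗ξ/‖ξ‖²)(A − a₀). -/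

import Mathlib

/-- Along a solution of `ξ' = −Aᵀξ`, on amplitudes `b` with `b·ξ = 0`,
the constraint-preserving modification `p·a₀ + p_t` of the symbol `a₀` (where
`p(η) = I − ηηᵀ/‖η‖²`) coincides with `a₀ + (ξ⊗ξ/‖ξ‖²)(A − a₀)`. -/
theorem stmt_11 {n : ℕ}
    (A : Matrix (Fin n) (Fin n) ℝ) (a₀ : Matrix (Fin n) (Fin n) ℂ)
    (ξ : ℝ → Fin n → ℝ) (hξne : ∀ t, ξ t ≠ 0) (t₀ : ℝ)
    (hξ : HasDerivAt ξ (-(A.transpose.mulVec (ξ t₀))) t₀)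
    (P' : Matrix (Fin n) (Fin n) ℝ)
    (hP' : ∀ i j, HasDerivAt
      (fun t => ((1 : Matrix (Fin n) (Fin n) ℝ)
        - (∑ l, ξ t l ^ 2)⁻¹ • Matrix.vecMulVec (ξ t) (ξ t)) i j) (P' i j) t₀) :
    ∀ b : Fin n → ℂ, (∑ i, b i * (ξ t₀ i : ℂ)) = 0 →
      ((((1 : Matrix (Fin n) (Fin n) ℝ)
            - (∑ l, ξ t₀ l ^ 2)⁻¹ • Matrix.vecMulVec (ξ t₀) (ξ t₀)).map Complex.ofReal)
          * a₀ + P'.map Complex.ofReal).mulVec b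
      = (a₀ + (((∑ l, ξ t₀ l ^ 2)⁻¹ • Matrix.vecMulVec (ξ t₀) (ξ t₀)).map Complex.ofReal)
          * (A.map Complex.ofReal - a₀)).mulVec b := by
  intro b hb
  set x : Fin n → ℝ := ξ t₀ with hxdef
  set v : Fin n → ℝ := -(A.transpose.mulVec (ξ t₀)) with hvdef
  set s : ℝ := ∑ l, x l ^ 2 with hsdef
  have hcomp : ∀ i, HasDerivAt (fun t => ξ t i) (v i) t₀ := hasDerivAt_pi.mp hξ
  have hs0 : s ≠ 0 := by
    have h1 := hξne t₀
    have : 0 < s := by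
      obtain ⟨i, hi⟩ := Function.ne_iff.mp h1
      exact Finset.sum_pos' (fun l _ => sq_nonneg _) ⟨i, Finset.mem_univ i, pow_pos (abs_pos.mpr hi) 2 |>.trans_le (by rw [sq_abs])⟩
    exact this.ne'
  have hs : HasDerivAt (fun t => ∑ l, ξ t l ^ 2) (∑ l, (2:ℕ) * x l ^ 1 * v l) t₀ :=
    HasDerivAt.fun_sum (fun l _ => (hcomp l).pow 2)
  set s' : ℝ := ∑ l, (2:ℕ) * x l ^ 1 * v l with hs'def
  have hinv : HasDerivAt (fun t => (∑ l, ξ t l ^ 2)⁻¹) (-s' / s ^ 2) t₀ := hs.inv hs0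
  have hij : ∀ i j, HasDerivAt
      (fun t => (1 : Matrix (Fin n) (Fin n) ℝ) i j - (∑ l, ξ t l ^ 2)⁻¹ * (ξ t i * ξ t j))
      (0 - ((-s' / s ^ 2) * (x i * x j) + s⁻¹ * (v i * x j + x i * v j))) t₀ :=
    fun i j => (hasDerivAt_const t₀ _).sub (hinv.mul ((hcomp i).mul (hcomp j)))
  simp only [Matrix.sub_apply, Matrix.smul_apply, Matrix.vecMulVec_apply, smul_eq_mul] at hP'
  have hP'eq : ∀ i j, P' i j = 0 - ((-s' / s ^ 2) * (x i * x j) + s⁻¹ * (v i * x j + x i * v j)) :=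
    fun i j => (hP' i j).unique (hij i j)
  have key : ∑ j, (x j : ℂ) * b j = 0 := by
    rw [← hb]; exact Finset.sum_congr rfl fun j _ => mul_comm _ _
  have hv : ∀ j, v j = -∑ k, A k j * x k := by
    intro j
    simp [hvdef, Matrix.mulVec, dotProduct, Matrix.transpose_apply, hxdef]
  funext i
  simp only [Matrix.mulVec, dotProduct, Matrix.add_apply, Matrix.mul_apply, Matrix.map_apply,
    Matrix.sub_apply, Matrix.smul_apply, Matrix.vecMulVec_apply, smul_eq_mul, Matrix.one_apply,
    hP'eq]
  have step : ∀ j ∈ Finset.univ, 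
      (∑ k, (((if i = k then (1:ℝ) else 0) - s⁻¹ * (x i * x k) : ℝ) : ℂ) * a₀ k j
        + ((0 - (-s' / s ^ 2 * (x i * x j) + s⁻¹ * (v i * x j + x i * v j)) : ℝ) : ℂ)) * b j
      = (a₀ i j + ∑ k, ((s⁻¹ * (x i * x k) : ℝ) : ℂ) * ((A k j : ℂ) - a₀ k j)) * b j
        + ((s' / s ^ 2 * x i - s⁻¹ * v i : ℝ) : ℂ) * ((x j : ℂ) * b j) := by
    intro j _
    have hfac : ∑ k, ((s:ℂ))⁻¹ * (((x i : ℂ)) * (x k : ℂ)) * (A k j : ℂ)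
        = (s:ℂ)⁻¹ * (x i : ℂ) * ∑ k, (A k j : ℂ) * (x k : ℂ) := by
      rw [Finset.mul_sum]; exact Finset.sum_congr rfl fun k _ => by ring
    push_cast [hv j, apply_ite Complex.ofReal]
    simp only [sub_mul, ite_mul, one_mul, zero_mul, Finset.sum_sub_distrib,
      Finset.sum_ite_eq, Finset.mem_univ, if_true, mul_sub, mul_add]
    rw [hfac]; ring
  rw [Finset.sum_congr rfl step, Finset.sum_add_distrib, ← Finset.mul_sum, key, mul_zero, add_zero]
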